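/- For all natural numbers n and s with 2s ≤ n, the group of ℝ-algebra automorphisms of the product algebra ℝ^(n−2s) × ℂ^s is finite of order (n−2s)! · s! · 2^s. -/
import Mathlib

open Complex

namespace ArchAut

variable {r s : ℕ}

/-- conjugate-or-not -/
def cnj (b : Bool) (z : ℂ) : ℂ := cond b ((starRingEnd ℂ) z) z

lemma cnj_cnj (b : Bool) (z : ℂ) : cnj b (cnj b z) = z := by
  cases b <;> simp [cnj]

lemma cnj_zero (b : Bool) : cnj b 0 = 0 := by cases b <;> simp [cnj]

lemma cnj_eq_zero {b : Bool} {z : ℂ} (h : cnj b z = 0) : z = 0 := by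
  cases b <;> simpa [cnj] using h

lemma cnj_one (b : Bool) : cnj b 1 = 1 := by cases b <;> simp [cnj]

lemma cnj_mul (b : Bool) (z w : ℂ) : cnj b (z * w) = cnj b z * cnj b w := by
  cases b <;> simp [cnj]

lemma cnj_add (b : Bool) (z w : ℂ) : cnj b (z + w) = cnj b z + cnj b w := by
  cases b <;> simp [cnj]

lemma cnj_re (b : Bool) (z : ℂ) : (cnj b z).re = z.re := by cases b <;> simp [cnj]

lemma cnj_im (b : Bool) (z : ℂ) : (cnj b z).im = cond b (-z.im) z.im := by
  cases b <;> simp [cnj]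

/-- The product algebra -/
abbrev AA (r s : ℕ) : Type := (Fin r → ℝ) × (Fin s → ℂ)

lemma mul_single_real (p : Fin r → ℝ) (i : Fin r) :
    p * Pi.single i 1 = Pi.single i (p i) := by
  funext j
  by_cases h : j = i <;> simp [Pi.single_apply, h]

lemma mul_single_complex (p : Fin s → ℂ) (i : Fin s) :
    p * Pi.single i 1 = Pi.single i (p i) := by
  funext j
  by_cases h : j = i <;> simp [Pi.single_apply, h]

lemma smul_single_one_real (c : ℝ) (i : Fin r) :
    c • (Pi.single i 1 : Fin r → ℝ) = Pi.single i c := by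
  funext j
  by_cases h : j = i <;> simp [Pi.single_apply, h]

lemma smul_single_one_complex (c : ℝ) (i : Fin s) :
    c • (Pi.single i 1 : Fin s → ℂ) = Pi.single i (c : ℂ) := by
  funext j
  by_cases h : j = i <;> simp [Pi.single_apply, h]

/-- Any `ℝ`-algebra hom from the product algebra to a field factors through a projection. -/
lemma hom_factor {K : Type} [Field K] [Algebra ℝ K] (φ : AA r s →ₐ[ℝ] K) :
    (∃ i : Fin r, ∀ p : AA r s, φ p = algebraMap ℝ K (p.1 i)) ∨
    (∃ i : Fin s, ∃ ψ : ℂ →ₐ[ℝ] K, ∀ p : AA r s, φ p = ψ (p.2 i)) := by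
  have hsum : (∑ i : Fin r, φ ((Pi.single i 1 : Fin r → ℝ), 0))
      + (∑ i : Fin s, φ (0, (Pi.single i 1 : Fin s → ℂ))) = 1 := by
    rw [← map_sum, ← map_sum, ← map_add]
    have h1 : ((∑ i : Fin r, ((Pi.single i 1 : Fin r → ℝ), (0 : Fin s → ℂ)))
        + ∑ i : Fin s, ((0 : Fin r → ℝ), (Pi.single i 1 : Fin s → ℂ))) = (1 : AA r s) := by
      refine Prod.ext ?_ ?_
      · simp only [Prod.fst_add, Prod.fst_sum]
        funext j
        simp [Finset.sum_apply, Pi.single_apply]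
      · simp only [Prod.snd_add, Prod.snd_sum]
        funext j
        simp [Finset.sum_apply, Pi.single_apply]
    rw [h1, map_one]
  by_cases hR : ∃ i : Fin r, φ ((Pi.single i 1 : Fin r → ℝ), 0) ≠ 0
  · obtain ⟨i, hi⟩ := hR
    have hid : φ ((Pi.single i 1 : Fin r → ℝ), 0)
        * φ ((Pi.single i 1 : Fin r → ℝ), 0) = φ ((Pi.single i 1 : Fin r → ℝ), 0) := by
      rw [← map_mul]
      congr 1
      refine Prod.ext ?_ (by simp)
      simpa using mul_single_real (Pi.single i 1) i
    have hone : φ ((Pi.single i 1 : Fin r → ℝ), 0) = 1 := by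
      rcases (IsIdempotentElem.iff_eq_zero_or_one).1 hid with h | h
      · exact absurd h hi
      · exact h
    left
    refine ⟨i, fun p => ?_⟩
    have key : p * ((Pi.single i 1 : Fin r → ℝ), 0)
        = p.1 i • ((Pi.single i 1 : Fin r → ℝ), (0 : Fin s → ℂ)) := by
      refine Prod.ext ?_ ?_
      · simpa [smul_single_one_real] using mul_single_real p.1 i
      · simp
    calc φ p = φ p * φ ((Pi.single i 1 : Fin r → ℝ), 0) := by rw [hone, mul_one]
      _ = φ (p * ((Pi.single i 1 : Fin r → ℝ), 0)) := (map_mul φ _ _).symm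
      _ = φ (p.1 i • ((Pi.single i 1 : Fin r → ℝ), (0 : Fin s → ℂ))) := by rw [key]
      _ = p.1 i • φ ((Pi.single i 1 : Fin r → ℝ), 0) := map_smul φ _ _
      _ = p.1 i • (1 : K) := by rw [hone]
      _ = algebraMap ℝ K (p.1 i) := (Algebra.algebraMap_eq_smul_one _).symm
  · by_cases hC : ∃ i : Fin s, φ (0, (Pi.single i 1 : Fin s → ℂ)) ≠ 0
    · obtain ⟨i, hi⟩ := hC
      have hid : φ (0, (Pi.single i 1 : Fin s → ℂ))
          * φ (0, (Pi.single i 1 : Fin s → ℂ)) = φ (0, (Pi.single i 1 : Fin s → ℂ)) := by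
        rw [← map_mul]
        congr 1
        refine Prod.ext (by simp) ?_
        simpa using mul_single_complex (Pi.single i 1) i
      have hone : φ (0, (Pi.single i 1 : Fin s → ℂ)) = 1 := by
        rcases (IsIdempotentElem.iff_eq_zero_or_one).1 hid with h | h
        · exact absurd h hi
        · exact h
      right
      have hmulz : ∀ z w : ℂ, ((0 : Fin r → ℝ), (Pi.single i z : Fin s → ℂ))
          * (0, Pi.single i w) = (0, Pi.single i (z * w)) := by
        intro z w
        refine Prod.ext (by simp) ?_
        funext j
        by_cases h : j = i <;> simp [Pi.single_apply, h]
      refine ⟨i, { toFun := fun z => φ (0, Pi.single i z)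
                   map_one' := hone
                   map_mul' := by
                     intro z w
                     rw [← map_mul, hmulz]
                   map_zero' := by
                     show φ (0, Pi.single i (0 : ℂ)) = 0
                     rw [Pi.single_zero]
                     exact map_zero φ
                   map_add' := by
                     intro z w
                     have hadd : ((0 : Fin r → ℝ), (Pi.single i (z + w) : Fin s → ℂ))
                         = (0, Pi.single i z) + (0, Pi.single i w) := by
                       refine Prod.ext (by simp) ?_
                       funext j
                       by_cases h : j = i <;> simp [Pi.single_apply, h]
                     show φ (0, Pi.single i (z + w))
                         = φ (0, Pi.single i z) + φ (0, Pi.single i w)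
                     rw [hadd, map_add]
                   commutes' := by
                     intro c
                     show φ (0, Pi.single i ((algebraMap ℝ ℂ) c)) = algebraMap ℝ K c
                     have : ((0 : Fin r → ℝ), (Pi.single i ((algebraMap ℝ ℂ) c) : Fin s → ℂ))
                         = c • ((0 : Fin r → ℝ), (Pi.single i 1 : Fin s → ℂ)) := by
                       refine Prod.ext (by simp) ?_
                       simpa using (smul_single_one_complex c i).symm
                     rw [this, map_smul, hone, Algebra.algebraMap_eq_smul_one] }, fun p => ?_⟩
      have key : p * ((0 : Fin r → ℝ), (Pi.single i 1 : Fin s → ℂ))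
          = ((0 : Fin r → ℝ), (Pi.single i (p.2 i) : Fin s → ℂ)) := by
        refine Prod.ext (by simp) ?_
        simpa using mul_single_complex p.2 i
      calc φ p = φ p * φ (0, (Pi.single i 1 : Fin s → ℂ)) := by rw [hone, mul_one]
        _ = φ (p * ((0 : Fin r → ℝ), (Pi.single i 1 : Fin s → ℂ))) := (map_mul φ _ _).symm
        _ = φ ((0 : Fin r → ℝ), (Pi.single i (p.2 i) : Fin s → ℂ)) := by rw [key]
    · exfalso
      push_neg at hR hC
      rw [Finset.sum_eq_zero (fun i _ => hR i), Finset.sum_eq_zero (fun i _ => hC i),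
        add_zero] at hsum
      exact zero_ne_one hsum

lemma homR (φ : AA r s →ₐ[ℝ] ℝ) : ∃ i : Fin r, ∀ p : AA r s, φ p = p.1 i := by
  rcases hom_factor φ with ⟨i, hi⟩ | ⟨i, ψ, hψ⟩
  · exact ⟨i, fun p => by simpa using hi p⟩
  · exfalso
    have h1 : ψ I * ψ I = -1 := by
      rw [← map_mul, I_mul_I, map_neg, map_one]
    nlinarith [sq_nonneg (ψ I)]

lemma homC (φ : AA r s →ₐ[ℝ] ℂ) :
    (∃ i : Fin r, ∀ p : AA r s, φ p = (p.1 i : ℂ)) ∨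
    (∃ i : Fin s, ∃ b : Bool, ∀ p : AA r s, φ p = cnj b (p.2 i)) := by
  rcases hom_factor φ with ⟨i, hi⟩ | ⟨i, ψ, hψ⟩
  · exact Or.inl ⟨i, fun p => by simpa using hi p⟩
  · right
    rcases Complex.real_algHom_eq_id_or_conj ψ with h | h
    · exact ⟨i, false, fun p => by simp [cnj, hψ p, h]⟩
    · exact ⟨i, true, fun p => by simp [cnj, hψ p, h, Complex.conjAe_coe]⟩

/-- The algebra endomorphism built from permutation/conjugation data. -/
def mkHom (σ : Fin r → Fin r) (τ : Fin s → Fin s) (ε : Fin s → Bool) :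
    AA r s →ₐ[ℝ] AA r s where
  toFun p := (fun j => p.1 (σ j), fun j => cnj (ε j) (p.2 (τ j)))
  map_one' := Prod.ext rfl (funext fun j => cnj_one _)
  map_mul' p q := Prod.ext rfl (funext fun j => cnj_mul _ _ _)
  map_zero' := Prod.ext rfl (funext fun j => cnj_zero _)
  map_add' p q := Prod.ext rfl (funext fun j => cnj_add _ _ _)
  commutes' c := by
    refine Prod.ext rfl (funext fun j => ?_)
    show cnj (ε j) ((algebraMap ℝ (AA r s) c).2 (τ j)) = (algebraMap ℝ (AA r s) c).2 j
    have h : (algebraMap ℝ (AA r s) c).2 = fun _ => (c : ℂ) := rfl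
    rw [h]
    cases ε j <;> simp [cnj, Complex.conj_ofReal]

lemma mkHom_apply (σ : Fin r → Fin r) (τ : Fin s → Fin s) (ε : Fin s → Bool) (p : AA r s) :
    mkHom σ τ ε p = (fun j => p.1 (σ j), fun j => cnj (ε j) (p.2 (τ j))) := rfl

/-- The algebra automorphism built from permutation/conjugation data. -/
noncomputable def mkAut (σ : Equiv.Perm (Fin r)) (τ : Equiv.Perm (Fin s)) (ε : Fin s → Bool) :
    AA r s ≃ₐ[ℝ] AA r s :=
  AlgEquiv.ofAlgHom (mkHom σ τ ε) (mkHom σ.symm τ.symm (ε ∘ τ.symm))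
    (AlgHom.ext fun p => Prod.ext
      (funext fun j => by simp [mkHom_apply])
      (funext fun j => by simp [mkHom_apply, cnj_cnj]))
    (AlgHom.ext fun p => Prod.ext
      (funext fun j => by simp [mkHom_apply])
      (funext fun j => by simp [mkHom_apply, cnj_cnj]))

lemma mkAut_apply (σ : Equiv.Perm (Fin r)) (τ : Equiv.Perm (Fin s)) (ε : Fin s → Bool)
    (p : AA r s) :
    mkAut σ τ ε p = (fun j => p.1 (σ j), fun j => cnj (ε j) (p.2 (τ j))) := rfl

lemma mk_injective :
    Function.Injective (fun d : Equiv.Perm (Fin r) × Equiv.Perm (Fin s) × (Fin s → Bool) =>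
      mkAut d.1 d.2.1 d.2.2) := by
  rintro ⟨σ, τ, ε⟩ ⟨σ', τ', ε'⟩ h
  simp only at h
  have hp : ∀ p : AA r s, mkAut σ τ ε p = mkAut σ' τ' ε' p := fun p => by rw [h]
  have htest := hp (fun i => ((i : ℕ) : ℝ), fun i => ((i : ℕ) : ℂ) + I)
  rw [mkAut_apply, mkAut_apply, Prod.mk.injEq] at htest
  obtain ⟨h1, h2⟩ := htest
  have hσ : σ = σ' := by
    ext j
    have hj := congrFun h1 j
    have : ((σ j : ℕ) : ℝ) = ((σ' j : ℕ) : ℝ) := hj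
    exact_mod_cast this
  have hτ : ∀ j, τ j = τ' j := by
    intro j
    have hj := congrFun h2 j
    have hre := congrArg Complex.re hj
    rw [cnj_re, cnj_re] at hre
    simp only [Complex.add_re, Complex.ofReal_re, Complex.I_re, add_zero,
      Complex.natCast_re] at hre
    have : ((τ j : ℕ) : ℝ) = ((τ' j : ℕ) : ℝ) := by exact_mod_cast hre
    have : ((τ j : ℕ)) = ((τ' j : ℕ)) := by exact_mod_cast this
    exact Fin.ext this
  have hε : ε = ε' := by
    funext j
    have hj := congrFun h2 j
    have him := congrArg Complex.im hj
    rw [cnj_im, cnj_im] at him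
    simp only [Complex.add_im, Complex.ofReal_im, Complex.I_im, zero_add,
      Complex.natCast_im] at him
    cases hεj : ε j <;> cases hεj' : ε' j <;> rw [hεj, hεj'] at him <;>
      first
      | rfl
      | (exfalso; norm_num at him)
  exact Prod.ext hσ (Prod.ext (Equiv.ext hτ) hε)

lemma mk_surjective :
    Function.Surjective (fun d : Equiv.Perm (Fin r) × Equiv.Perm (Fin s) × (Fin s → Bool) =>
      mkAut d.1 d.2.1 d.2.2) := by
  intro φ
  have hσex : ∀ j : Fin r, ∃ i : Fin r, ∀ p : AA r s, (φ p).1 j = p.1 i := by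
    intro j
    obtain ⟨i, hi⟩ := homR ((Pi.evalAlgHom ℝ (fun _ => ℝ) j).comp
      ((AlgHom.fst ℝ (Fin r → ℝ) (Fin s → ℂ)).comp φ.toAlgHom))
    exact ⟨i, fun p => hi p⟩
  choose σ0 hσ0 using hσex
  have hτex : ∀ j : Fin s, ∃ i : Fin s, ∃ b : Bool,
      ∀ p : AA r s, (φ p).2 j = cnj b (p.2 i) := by
    intro j
    rcases homC ((Pi.evalAlgHom ℝ (fun _ => ℂ) j).comp
      ((AlgHom.snd ℝ (Fin r → ℝ) (Fin s → ℂ)).comp φ.toAlgHom)) with ⟨i, hi⟩ | ⟨i, b, hb⟩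
    · exfalso
      obtain ⟨p, hp⟩ := φ.surjective ((0 : Fin r → ℝ), (Pi.single j I : Fin s → ℂ))
      have h1 : (φ p).2 j = I := by rw [hp]; simp
      have h2 : (φ p).2 j = ((p.1 i : ℝ) : ℂ) := hi p
      rw [h1] at h2
      have := congrArg Complex.im h2
      simp at this
    · exact ⟨i, b, fun p => hb p⟩
  choose τ0 ε hτ0 using hτex
  have hσinj : Function.Injective σ0 := by
    intro j j' hjj'
    by_contra hne
    obtain ⟨p, hp⟩ := φ.surjective ((Pi.single j 1 : Fin r → ℝ), (0 : Fin s → ℂ))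
    have h1 : p.1 (σ0 j) = 1 := by
      rw [← hσ0 j p, hp]; simp
    have h2 : p.1 (σ0 j') = 0 := by
      rw [← hσ0 j' p, hp]
      simp [Pi.single_apply, Ne.symm hne]
    rw [hjj'] at h1
    rw [h1] at h2
    exact one_ne_zero h2
  have hτinj : Function.Injective τ0 := by
    intro j j' hjj'
    by_contra hne
    obtain ⟨p, hp⟩ := φ.surjective ((0 : Fin r → ℝ), (Pi.single j I : Fin s → ℂ))
    have h1 : cnj (ε j) (p.2 (τ0 j)) = I := by
      rw [← hτ0 j p, hp]; simp
    have h2 : cnj (ε j') (p.2 (τ0 j')) = 0 := by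
      rw [← hτ0 j' p, hp]
      simp [Pi.single_apply, Ne.symm hne]
    have h3 : p.2 (τ0 j') = 0 := cnj_eq_zero h2
    rw [← hjj'] at h3
    rw [h3, cnj_zero] at h1
    exact I_ne_zero h1.symm
  let σ : Equiv.Perm (Fin r) := Equiv.ofBijective σ0 (Finite.injective_iff_bijective.1 hσinj)
  let τ : Equiv.Perm (Fin s) := Equiv.ofBijective τ0 (Finite.injective_iff_bijective.1 hτinj)
  refine ⟨(σ, τ, ε), ?_⟩
  ext p
  · exact (hσ0 _ p).symm
  · exact (hτ0 _ p).symm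

lemma key (r s : ℕ) :
    Finite (AA r s ≃ₐ[ℝ] AA r s) ∧
    Nat.card (AA r s ≃ₐ[ℝ] AA r s) = r.factorial * s.factorial * 2 ^ s := by
  let e : (Equiv.Perm (Fin r) × Equiv.Perm (Fin s) × (Fin s → Bool)) ≃ (AA r s ≃ₐ[ℝ] AA r s) :=
    Equiv.ofBijective _ ⟨mk_injective, mk_surjective⟩
  constructor
  · exact Finite.of_equiv _ e
  · rw [← Nat.card_congr e, Nat.card_prod, Nat.card_prod]
    simp [Nat.card_eq_fintype_card, Fintype.card_perm, Fintype.card_fin, Fintype.card_fun]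
    ring

end ArchAut

/-- For all natural numbers `n` and `s` with `2s ≤ n`, the group of
ℝ-algebra automorphisms of the product algebra `ℝ^(n−2s) × ℂ^s` is finite of order
`(n−2s)! · s! · 2^s`. -/
theorem aut_group_of_archimedean_algebra (n s : ℕ) (h : 2 * s ≤ n) :
    Finite (((Fin (n - 2 * s) → ℝ) × (Fin s → ℂ)) ≃ₐ[ℝ]
      ((Fin (n - 2 * s) → ℝ) × (Fin s → ℂ))) ∧
    Nat.card (((Fin (n - 2 * s) → ℝ) × (Fin s → ℂ)) ≃ₐ[ℝ]
      ((Fin (n - 2 * s) → ℝ) × (Fin s → ℂ))) =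
      (n - 2 * s).factorial * s.factorial * 2 ^ s := by
  exact ArchAut.key (n - 2 * s) s
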